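/- arXiv:1010.3566 — 2 statements merged into one kernel-verified Lean document; each statement's English description precedes it below -/
import Mathlib

section
/- Let P be a nonnegative n×m matrix with rk₊(P) = k, and suppose P = Σ_{h=1}^k x_h·(y_h)ᵀ where all vectors x_h ∈ ℝⁿ, y_h ∈ ℝᵐ have strictly positive entries and the Jacobian of the dyadic parametrization f at this point has maximal rank k(n+m−k). Then there exists ε > 0 such that every nonnegative matrix N with ‖N − P‖_F < ε and rank(N) = rank(P) satisfies rk₊(N) = rk₊(P). -/
open Matrix BigOperators Filter Topology

/-- The nonnegative rank: least `k` such that `P` is a sum of `k` nonnegative dyads. -/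
noncomputable def nnRank {n m : ℕ} (P : Matrix (Fin n) (Fin m) ℝ) : ℕ :=
  sInf {k : ℕ | ∃ (c : Fin k → Fin n → ℝ) (r : Fin k → Fin m → ℝ),
    (∀ h i, 0 ≤ c h i) ∧ (∀ h j, 0 ≤ r h j) ∧
    P = ∑ h, Matrix.vecMulVec (c h) (r h)}

/-- Frobenius distance between two matrices. -/
noncomputable def frobDist {n m : ℕ} (P N : Matrix (Fin n) (Fin m) ℝ) : ℝ :=
  Real.sqrt (∑ i, ∑ j, (P i j - N i j) ^ 2)


lemma frobDist_nonneg {n m : ℕ} (P N : Matrix (Fin n) (Fin m) ℝ) : 0 ≤ frobDist P N :=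
  Real.sqrt_nonneg _

lemma abs_entry_le_frobDist {n m : ℕ} (P N : Matrix (Fin n) (Fin m) ℝ) (i : Fin n) (j : Fin m) :
    |P i j - N i j| ≤ frobDist P N := by
  rw [← Real.sqrt_sq_eq_abs]
  apply Real.sqrt_le_sqrt
  calc (P i j - N i j) ^ 2 ≤ ∑ j', (P i j' - N i j') ^ 2 := by
        apply Finset.single_le_sum (f := fun j' => (P i j' - N i j') ^ 2)
          (fun _ _ => sq_nonneg _) (Finset.mem_univ j)
    _ ≤ ∑ i', ∑ j', (P i' j' - N i' j') ^ 2 := by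
        apply Finset.single_le_sum (f := fun i' => ∑ j', (P i' j' - N i' j') ^ 2)
          (fun _ _ => Finset.sum_nonneg fun _ _ => sq_nonneg _) (Finset.mem_univ i)

lemma sq_frobDist {n m : ℕ} (P N : Matrix (Fin n) (Fin m) ℝ) :
    (frobDist P N) ^ 2 = ∑ i, ∑ j, (P i j - N i j) ^ 2 := by
  rw [frobDist, Real.sq_sqrt]
  exact Finset.sum_nonneg fun _ _ => Finset.sum_nonneg fun _ _ => sq_nonneg _

lemma nnRank_le_of_decomp {n m k : ℕ} {N : Matrix (Fin n) (Fin m) ℝ}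
    {c : Fin k → Fin n → ℝ} {r : Fin k → Fin m → ℝ}
    (hc : ∀ h i, 0 ≤ c h i) (hr : ∀ h j, 0 ≤ r h j)
    (hN : N = ∑ h, Matrix.vecMulVec (c h) (r h)) : nnRank N ≤ k :=
  Nat.sInf_le ⟨c, r, hc, hr, hN⟩

/-- padding a decomposition with zero dyads -/
lemma decomp_pad {n m j l : ℕ} (N : Matrix (Fin n) (Fin m) ℝ) (hjl : j ≤ l)
    (c : Fin j → Fin n → ℝ) (r : Fin j → Fin m → ℝ)
    (hc : ∀ h i, 0 ≤ c h i) (hr : ∀ h j, 0 ≤ r h j)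
    (hN : N = ∑ h, Matrix.vecMulVec (c h) (r h)) :
    ∃ (c' : Fin l → Fin n → ℝ) (r' : Fin l → Fin m → ℝ),
      (∀ h i, 0 ≤ c' h i) ∧ (∀ h j, 0 ≤ r' h j) ∧
      N = ∑ h, Matrix.vecMulVec (c' h) (r' h) := by
  classical
  refine ⟨fun h => if hh : (h : ℕ) < j then c ⟨h, hh⟩ else 0,
          fun h => if hh : (h : ℕ) < j then r ⟨h, hh⟩ else 0, ?_, ?_, ?_⟩
  · intro h i; by_cases hh : (h : ℕ) < j <;> simp [hh]; exact hc _ _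
  · intro h i; by_cases hh : (h : ℕ) < j <;> simp [hh]; exact hr _ _
  · ext i jj
    rw [hN]
    rw [Matrix.sum_apply, Matrix.sum_apply]
    simp only [Matrix.vecMulVec_apply]
    have e1 : ∀ (l' : ℕ),
        (∑ h : Fin l', (if hh : (h : ℕ) < j then c ⟨h, hh⟩ else 0) i *
          (if hh : (h : ℕ) < j then r ⟨h, hh⟩ else 0) jj) =
        ∑ h ∈ Finset.range l', (if hh : h < j then c ⟨h, hh⟩ i * r ⟨h, hh⟩ jj else 0) := by
      intro l'
      rw [Finset.sum_range fun h => _]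
      apply Finset.sum_congr rfl
      intro h _
      by_cases hh : (h : ℕ) < j <;> simp [hh]
    rw [e1]
    rw [← Finset.sum_subset (Finset.range_subset_range.2 hjl)
      (fun h _ hh => by simp [Finset.mem_range.not.1 hh])]
    rw [Finset.sum_range (n := j) fun h => _]
    apply Finset.sum_congr rfl
    intro h _
    simp [h.isLt]

/-- every nonnegative matrix is the sum of its n "row dyads" -/
lemma decomp_rows {n m : ℕ} (N : Matrix (Fin n) (Fin m) ℝ) (hN : ∀ i j, 0 ≤ N i j) :
    ∃ (c : Fin n → Fin n → ℝ) (r : Fin n → Fin m → ℝ),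
      (∀ h i, 0 ≤ c h i) ∧ (∀ h j, 0 ≤ r h j) ∧
      N = ∑ h, Matrix.vecMulVec (c h) (r h) := by
  classical
  refine ⟨fun h i => if i = h then 1 else 0, fun h j => N h j, ?_, ?_, ?_⟩
  · intro h i; by_cases hh : i = h <;> simp [hh]
  · intro h j; exact hN h j
  · ext i j
    rw [Matrix.sum_apply]
    simp [Matrix.vecMulVec_apply, ite_mul]

lemma decomp_cols {n m : ℕ} (N : Matrix (Fin n) (Fin m) ℝ) (hN : ∀ i j, 0 ≤ N i j) :
    ∃ (c : Fin m → Fin n → ℝ) (r : Fin m → Fin m → ℝ),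
      (∀ h i, 0 ≤ c h i) ∧ (∀ h j, 0 ≤ r h j) ∧
      N = ∑ h, Matrix.vecMulVec (c h) (r h) := by
  classical
  refine ⟨fun h i => N i h, fun h j => if j = h then 1 else 0, ?_, ?_, ?_⟩
  · intro h i; exact hN i h
  · intro h j; by_cases hh : j = h <;> simp [hh]
  · ext i j
    rw [Matrix.sum_apply]
    simp [Matrix.vecMulVec_apply, mul_ite]


lemma exists_eps_of_mem_nhds {n m : ℕ} {S : Set (Matrix (Fin n) (Fin m) ℝ)}
    {P : Matrix (Fin n) (Fin m) ℝ} (hS : S ∈ 𝓝 P) :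
    ∃ ε > (0 : ℝ), ∀ N, frobDist N P < ε → N ∈ S := by
  obtain ⟨U, hUS, hU, hPU⟩ := mem_nhds_iff.1 hS
  -- identity from the pi (metric) space to the matrix space is continuous
  have hι : Continuous (fun f : Fin n → Fin m → ℝ => (Matrix.of f : Matrix (Fin n) (Fin m) ℝ)) :=
    continuous_pi fun i => continuous_pi fun j =>
      (continuous_apply j).comp (continuous_apply i)
  have hU' : IsOpen ((fun f : Fin n → Fin m → ℝ =>
      (Matrix.of f : Matrix (Fin n) (Fin m) ℝ)) ⁻¹' U) := hU.preimage hι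
  have hPU' : (fun i j => P i j) ∈ (fun f : Fin n → Fin m → ℝ =>
      (Matrix.of f : Matrix (Fin n) (Fin m) ℝ)) ⁻¹' U := hPU
  obtain ⟨ε, hε, hball⟩ := Metric.isOpen_iff.1 hU' _ hPU'
  refine ⟨ε, hε, fun N hN => ?_⟩
  apply hUS
  have : (fun i j => N i j) ∈ Metric.ball (fun i j => P i j) ε := by
    rw [Metric.mem_ball]
    rw [dist_pi_lt_iff hε]
    intro i
    rw [dist_pi_lt_iff hε]
    intro j
    rw [Real.dist_eq]
    exact lt_of_le_of_lt (abs_entry_le_frobDist N P i j) hN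
  exact hball this

/-- Lower semicontinuity: if `P` admits no nonnegative decomposition of size `kk`, then
nothing near `P` admits one either. -/
lemma no_small_decomp_near {n m kk : ℕ} (P : Matrix (Fin n) (Fin m) ℝ)
    (hPnn : ∀ i j, 0 ≤ P i j)
    (hP : ¬ ∃ (c : Fin kk → Fin n → ℝ) (r : Fin kk → Fin m → ℝ),
      (∀ h i, 0 ≤ c h i) ∧ (∀ h j, 0 ≤ r h j) ∧ P = ∑ h, Matrix.vecMulVec (c h) (r h)) :
    ∃ ε > (0 : ℝ), ∀ N : Matrix (Fin n) (Fin m) ℝ, frobDist N P < ε →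
      ¬ ∃ (c : Fin kk → Fin n → ℝ) (r : Fin kk → Fin m → ℝ),
        (∀ h i, 0 ≤ c h i) ∧ (∀ h j, 0 ≤ r h j) ∧ N = ∑ h, Matrix.vecMulVec (c h) (r h) := by
  classical
  set B : ℝ := (n : ℝ) + ∑ i, ∑ j, P i j with hB
  have hB0 : 0 ≤ B := by
    apply add_nonneg (Nat.cast_nonneg n)
    exact Finset.sum_nonneg fun _ _ => Finset.sum_nonneg fun _ _ => hPnn _ _
  set K : Set ((Fin kk → Fin n → ℝ) × (Fin kk → Fin m → ℝ)) :=
    (Set.univ.pi fun _ => Set.univ.pi fun _ => Set.Icc (0:ℝ) 1) ×ˢ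
    (Set.univ.pi fun _ => Set.univ.pi fun _ => Set.Icc (0:ℝ) B) with hK
  have hKc : IsCompact K :=
    (isCompact_univ_pi fun _ => isCompact_univ_pi fun _ => isCompact_Icc).prod
    (isCompact_univ_pi fun _ => isCompact_univ_pi fun _ => isCompact_Icc)
  set F : ((Fin kk → Fin n → ℝ) × (Fin kk → Fin m → ℝ)) → Matrix (Fin n) (Fin m) ℝ :=
    fun q => ∑ h, Matrix.vecMulVec (q.1 h) (q.2 h) with hF
  have hFc : Continuous F := by
    apply continuous_finset_sum
    intro h _
    apply continuous_matrix
    intro i j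
    have : (fun q : ((Fin kk → Fin n → ℝ) × (Fin kk → Fin m → ℝ)) =>
        Matrix.vecMulVec (q.1 h) (q.2 h) i j) = fun q => q.1 h i * q.2 h j := by
      funext q; rw [Matrix.vecMulVec_apply]
    rw [this]
    fun_prop
  set T := F '' K with hT
  have hTc : IsCompact T := hKc.image hFc
  have hTne : T.Nonempty := by
    refine ⟨F 0, Set.mem_image_of_mem F ?_⟩
    constructor
    · intro h _; intro i _; exact Set.mem_Icc.2 ⟨le_refl _, zero_le_one⟩
    · intro h _; intro j _; exact Set.mem_Icc.2 ⟨le_refl _, hB0⟩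
  have hPT : P ∉ T := by
    rintro ⟨⟨c, r⟩, hq, hFq⟩
    exact hP ⟨c, r, fun h i => (hq.1 h (Set.mem_univ h) i (Set.mem_univ i)).1,
      fun h j => (hq.2 h (Set.mem_univ h) j (Set.mem_univ j)).1, hFq.symm⟩
  set d : Matrix (Fin n) (Fin m) ℝ → ℝ := fun Q => ∑ i, ∑ j, (Q i j - P i j) ^ 2 with hd
  have hdc : Continuous d := by
    apply continuous_finset_sum; intro i _
    apply continuous_finset_sum; intro j _
    fun_prop
  obtain ⟨Q₀, hQ₀T, hQ₀min⟩ := hTc.exists_isMinOn hTne hdc.continuousOn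
  have hdpos : ∀ Q ∈ T, 0 < d Q := by
    intro Q hQ
    rcases lt_or_eq_of_le (Finset.sum_nonneg fun i _ =>
      Finset.sum_nonneg fun j _ => sq_nonneg (Q i j - P i j) : 0 ≤ d Q) with h | h
    · exact h
    · exfalso
      have hQP : Q = P := by
        ext i j
        have h1 : ∀ i ∈ Finset.univ, (0:ℝ) ≤ ∑ j, (Q i j - P i j)^2 :=
          fun i _ => Finset.sum_nonneg fun j _ => sq_nonneg _
        have h2 := (Finset.sum_eq_zero_iff_of_nonneg h1).1 h.symm i (Finset.mem_univ i)
        have h3 := (Finset.sum_eq_zero_iff_of_nonneg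
          (fun j _ => sq_nonneg (Q i j - P i j))).1 h2 j (Finset.mem_univ j)
        have := pow_eq_zero_iff (n := 2) (by norm_num) |>.1 h3
        linarith [sub_eq_zero.1 this]
      exact hPT (hQP ▸ hQ)
  set δ := d Q₀ with hδ
  have hδ0 : 0 < δ := hdpos Q₀ hQ₀T
  refine ⟨min 1 (Real.sqrt δ), lt_min one_pos (Real.sqrt_pos.2 hδ0), ?_⟩
  rintro N hNP ⟨c, r, hc, hr, hNdec⟩
  -- N is entrywise within 1 of P, and nonnegative
  have hN1 : ∀ i j, N i j ≤ P i j + 1 := by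
    intro i j
    have := abs_entry_le_frobDist N P i j
    have h2 : |N i j - P i j| < 1 := lt_of_le_of_lt this (lt_of_lt_of_le hNP (min_le_left _ _))
    linarith [abs_lt.1 h2 |>.2]
  have hNnn : ∀ i j, 0 ≤ N i j := by
    intro i j
    rw [hNdec, Matrix.sum_apply]
    exact Finset.sum_nonneg fun h _ => by
      rw [Matrix.vecMulVec_apply]; exact mul_nonneg (hc h i) (hr h j)
  -- each dyad is entrywise dominated by N
  have hdom : ∀ h i j, c h i * r h j ≤ N i j := by
    intro h i j
    rw [hNdec, Matrix.sum_apply]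
    have step : Matrix.vecMulVec (c h) (r h) i j ≤
        ∑ h' : Fin kk, Matrix.vecMulVec (c h') (r h') i j := by
      apply Finset.single_le_sum (f := fun h' => Matrix.vecMulVec (c h') (r h') i j)
      · intro h' _
        show (0:ℝ) ≤ Matrix.vecMulVec (c h') (r h') i j
        rw [Matrix.vecMulVec_apply]
        exact mul_nonneg (hc h' i) (hr h' j)
      · exact Finset.mem_univ h
    rw [Matrix.vecMulVec_apply] at step
    exact step
  -- normalize the decomposition
  set s : Fin kk → ℝ := fun h => ∑ i, c h i with hs
  have hs0 : ∀ h, 0 ≤ s h := fun h => Finset.sum_nonneg fun i _ => hc h i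
  have hcs : ∀ h i, c h i ≤ s h := fun h i =>
    Finset.single_le_sum (fun i' _ => hc h i') (Finset.mem_univ i)
  set c' : Fin kk → Fin n → ℝ := fun h => if s h = 0 then 0 else (s h)⁻¹ • c h with hc'
  set r' : Fin kk → Fin m → ℝ := fun h => if s h = 0 then 0 else s h • r h with hr'
  have hdyad : ∀ h, Matrix.vecMulVec (c' h) (r' h) = Matrix.vecMulVec (c h) (r h) := by
    intro h
    by_cases hsh : s h = 0
    · have hch : ∀ i, c h i = 0 := by
        intro i
        have := (Finset.sum_eq_zero_iff_of_nonneg (fun i' _ => hc h i')).1 hsh i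
          (Finset.mem_univ i)
        exact this
      ext i j
      simp [hc', hr', hsh, Matrix.vecMulVec_apply, hch i]
    · ext i j
      simp only [hc', hr', if_neg hsh, Matrix.vecMulVec_apply, Pi.smul_apply, smul_eq_mul]
      field_simp
  have hmem : (c', r') ∈ K := by
    constructor
    · intro h _; intro i _
      refine Set.mem_Icc.2 ⟨?_, ?_⟩
      · by_cases hsh : s h = 0 <;>
          simp [hc', hsh, mul_nonneg, inv_nonneg.2 (hs0 h), hc h i]
      · by_cases hsh : s h = 0
        · simp [hc', hsh]
        · simp only [hc', if_neg hsh, Pi.smul_apply, smul_eq_mul]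
          rw [inv_mul_le_one₀ (lt_of_le_of_ne (hs0 h) (Ne.symm hsh))]
          exact hcs h i
    · intro h _; intro j _
      refine Set.mem_Icc.2 ⟨?_, ?_⟩
      · by_cases hsh : s h = 0 <;>
          simp [hr', hsh, mul_nonneg (hs0 h) (hr h j)]
      · by_cases hsh : s h = 0
        · simp [hr', hsh, hB0]
        · simp only [hr', if_neg hsh, Pi.smul_apply, smul_eq_mul]
          have : s h * r h j = ∑ i, c h i * r h j := by
            rw [hs, ← Finset.sum_mul]
          rw [this]
          calc ∑ i, c h i * r h j ≤ ∑ i, N i j :=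
                Finset.sum_le_sum fun i _ => hdom h i j
            _ ≤ ∑ i, (P i j + 1) := Finset.sum_le_sum fun i _ => hN1 i j
            _ = (∑ i, P i j) + n := by
                rw [Finset.sum_add_distrib]; simp
            _ ≤ B := by
                rw [hB]
                have : ∑ i, P i j ≤ ∑ i, ∑ j', P i j' :=
                  Finset.sum_le_sum fun i _ =>
                    Finset.single_le_sum (fun j' _ => hPnn i j') (Finset.mem_univ j)
                linarith
  have hNT : N ∈ T := by
    refine ⟨(c', r'), hmem, ?_⟩
    rw [hF]
    simp only
    rw [Finset.sum_congr rfl fun h _ => hdyad h]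
    exact hNdec.symm
  have h1 : δ ≤ d N := hQ₀min hNT
  have h2 : d N < δ := by
    have hfd : frobDist N P < Real.sqrt δ := lt_of_lt_of_le hNP (min_le_right _ _)
    have : (frobDist N P) ^ 2 < (Real.sqrt δ) ^ 2 := by
      apply pow_lt_pow_left₀ hfd (frobDist_nonneg N P)
      norm_num
    rw [Real.sq_sqrt hδ0.le, sq_frobDist] at this
    exact this
  linarith

lemma hasFDerivAt_dyadic {n m k : ℕ} (x : Fin k → Fin n → ℝ) (y : Fin k → Fin m → ℝ) :
    HasFDerivAt (fun q : (Fin k → (Fin n → ℝ)) × (Fin k → (Fin m → ℝ)) =>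
        fun i j => ∑ h, q.1 h i * q.2 h j)
      (ContinuousLinearMap.pi fun i => ContinuousLinearMap.pi fun j =>
        ∑ h : Fin k, (x h i • ((ContinuousLinearMap.proj j).comp
                ((ContinuousLinearMap.proj h).comp
                  (ContinuousLinearMap.snd ℝ (Fin k → Fin n → ℝ) (Fin k → Fin m → ℝ)))) +
              y h j • ((ContinuousLinearMap.proj i).comp
                ((ContinuousLinearMap.proj h).comp
                  (ContinuousLinearMap.fst ℝ (Fin k → Fin n → ℝ) (Fin k → Fin m → ℝ))))))
      (x, y) := by
  apply hasFDerivAt_pi''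
  intro i
  rw [ContinuousLinearMap.proj_pi]
  apply hasFDerivAt_pi''
  intro j
  rw [ContinuousLinearMap.proj_pi]
  have : ∀ h : Fin k, HasFDerivAt
      (fun q : (Fin k → (Fin n → ℝ)) × (Fin k → (Fin m → ℝ)) => q.1 h i * q.2 h j)
      (x h i • ((ContinuousLinearMap.proj j).comp
          ((ContinuousLinearMap.proj h).comp
            (ContinuousLinearMap.snd ℝ (Fin k → Fin n → ℝ) (Fin k → Fin m → ℝ)))) +
        y h j • ((ContinuousLinearMap.proj i).comp
          ((ContinuousLinearMap.proj h).comp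
            (ContinuousLinearMap.fst ℝ (Fin k → Fin n → ℝ) (Fin k → Fin m → ℝ)))))
      (x, y) := by
    intro h
    have h1 := HasFDerivAt.fun_mul (x := ((x, y) : (Fin k → Fin n → ℝ) × (Fin k → Fin m → ℝ)))
      (((ContinuousLinearMap.proj i).comp ((ContinuousLinearMap.proj h).comp
        (ContinuousLinearMap.fst ℝ (Fin k → Fin n → ℝ) (Fin k → Fin m → ℝ)))).hasFDerivAt)
      (((ContinuousLinearMap.proj j).comp ((ContinuousLinearMap.proj h).comp
        (ContinuousLinearMap.snd ℝ (Fin k → Fin n → ℝ) (Fin k → Fin m → ℝ)))).hasFDerivAt)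
    simpa using h1
  exact HasFDerivAt.fun_sum fun h _ => this h

/-- Dimension bound: if every matrix in `S` maps the "orthogonal complement" of the `y`'s
into the span of the `x`'s, then `S` has codimension at least
`(dim ker Y) * (n - dim span x)`. -/
lemma dim_bound {n m k : ℕ} (x : Fin k → Fin n → ℝ) (y : Fin k → Fin m → ℝ)
    (S : Submodule ℝ (Fin n → Fin m → ℝ))
    (hS : ∀ M ∈ S, ∀ w : Fin m → ℝ, (∀ h, ∑ j, y h j * w j = 0) →
      (fun i => ∑ j, M i j * w j) ∈ Submodule.span ℝ (Set.range x)) :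
    Module.finrank ℝ S +
      (m - k) * (n - Module.finrank ℝ (Submodule.span ℝ (Set.range x))) ≤ n * m := by
  classical
  set U : Submodule ℝ (Fin n → ℝ) := Submodule.span ℝ (Set.range x) with hU
  set Ψ : (Fin m → ℝ) →ₗ[ℝ] (Fin k → ℝ) := (Matrix.of y).mulVecLin with hΨ
  set Z : Submodule ℝ (Fin m → ℝ) := LinearMap.ker Ψ with hZ
  -- dim Z ≥ m - k
  have hZdim : m - k ≤ Module.finrank ℝ Z := by
    have h1 := LinearMap.finrank_range_add_finrank_ker Ψ
    have h2 : Module.finrank ℝ (LinearMap.range Ψ) ≤ k := by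
      have := Submodule.finrank_le (LinearMap.range Ψ)
      rwa [Module.finrank_fintype_fun_eq_card, Fintype.card_fin] at this
    have h3 : Module.finrank ℝ (Fin m → ℝ) = m := by
      rw [Module.finrank_fintype_fun_eq_card, Fintype.card_fin]
    rw [← hZ] at h1
    omega
  -- The quotient
  set Q := (Fin n → ℝ) ⧸ U with hQ
  have hQdim : Module.finrank ℝ Q + Module.finrank ℝ U = n := by
    have := Submodule.finrank_quotient_add_finrank U
    rwa [Module.finrank_fintype_fun_eq_card, Fintype.card_fin] at this
  -- the linear map Θ
  set Θ : (Fin n → Fin m → ℝ) →ₗ[ℝ] (Z →ₗ[ℝ] Q) :=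
    { toFun := fun M => U.mkQ ∘ₗ (Matrix.of M).mulVecLin ∘ₗ Z.subtype
      map_add' := by
        intro M N
        apply LinearMap.ext
        intro z
        simp only [LinearMap.comp_apply, Matrix.mulVecLin_apply, LinearMap.add_apply]
        rw [← map_add]
        congr 1
        rw [← Matrix.add_mulVec]
        rfl
      map_smul' := by
        intro a M
        apply LinearMap.ext
        intro z
        simp only [LinearMap.comp_apply, Matrix.mulVecLin_apply, LinearMap.smul_apply,
          RingHom.id_apply]
        rw [← _root_.map_smul]
        congr 1
        rw [← Matrix.smul_mulVec]
        rfl } with hΘ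
  -- S is contained in the kernel of Θ
  have hSker : S ≤ LinearMap.ker Θ := by
    intro M hM
    rw [LinearMap.mem_ker]
    apply LinearMap.ext
    intro z
    simp only [hΘ, LinearMap.coe_mk, AddHom.coe_mk, LinearMap.comp_apply,
      Matrix.mulVecLin_apply, LinearMap.zero_apply]
    rw [Submodule.mkQ_apply, Submodule.Quotient.mk_eq_zero]
    have hz : ∀ h, ∑ j, y h j * z.1 j = 0 := by
      intro h
      have h0 : Ψ z.1 = 0 := z.2
      have h1 : Matrix.of y *ᵥ z.1 = 0 := h0
      have h2 := congrFun h1 h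
      simp only [Matrix.mulVec, dotProduct, Matrix.of_apply, Pi.zero_apply] at h2
      exact h2
    have hmem := hS M hM z.1 hz
    have heq : (Matrix.of M *ᵥ Z.subtype z) = fun i => ∑ j, M i j * z.1 j := by
      funext i
      simp [Matrix.mulVec, dotProduct]
    rw [heq]
    exact hmem
  -- Θ is surjective
  have hΘsurj : Function.Surjective Θ := by
    intro g
    obtain ⟨Zc, hZc⟩ := Submodule.exists_isCompl Z
    set π : (Fin m → ℝ) →ₗ[ℝ] Z := Z.linearProjOfIsCompl Zc hZc with hπ
    obtain ⟨s, hs⟩ := Module.projective_lifting_property U.mkQ LinearMap.id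
      (Submodule.mkQ_surjective U)
    refine ⟨LinearMap.toMatrix' (s ∘ₗ g ∘ₗ π), ?_⟩
    apply LinearMap.ext
    intro z
    simp only [hΘ, LinearMap.coe_mk, AddHom.coe_mk, LinearMap.comp_apply]
    have h1 : (Matrix.of (LinearMap.toMatrix' (s ∘ₗ g ∘ₗ π))).mulVecLin
        = s ∘ₗ g ∘ₗ π := by
      rw [← Matrix.toLin'_apply']
      exact Matrix.toLin'_toMatrix' (s ∘ₗ g ∘ₗ π)
    rw [h1]
    simp only [LinearMap.comp_apply]
    have hπz : π (Z.subtype z) = z := Submodule.linearProjOfIsCompl_apply_left hZc z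
    rw [hπz]
    have := LinearMap.congr_fun hs (g z)
    exact this
  -- rank-nullity for Θ
  have hrank := LinearMap.finrank_range_add_finrank_ker Θ
  have hrange : LinearMap.range Θ = ⊤ := LinearMap.range_eq_top.2 hΘsurj
  have hrtop : Module.finrank ℝ (LinearMap.range Θ) =
      Module.finrank ℝ ↥Z * Module.finrank ℝ Q := by
    rw [hrange, finrank_top, Module.finrank_linearMap]
  have hdom : Module.finrank ℝ (Fin n → Fin m → ℝ) = n * m := by
    rw [Module.finrank_pi_fintype]
    simp [Module.finrank_fintype_fun_eq_card, Finset.sum_const, Finset.card_univ]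
  have hSle : Module.finrank ℝ S ≤ Module.finrank ℝ (LinearMap.ker Θ) :=
    Submodule.finrank_mono hSker
  have hdu : Module.finrank ℝ U ≤ n := by
    have := Submodule.finrank_le U
    rwa [Module.finrank_fintype_fun_eq_card, Fintype.card_fin] at this
  have hprod : (m - k) * (n - Module.finrank ℝ U) ≤
      Module.finrank ℝ ↥Z * Module.finrank ℝ Q :=
    Nat.mul_le_mul hZdim (by omega)
  omega

lemma indep_of_jac {n m k : ℕ} (hkn : k < n) (hkm : k < m)
    (x : Fin k → Fin n → ℝ) (y : Fin k → Fin m → ℝ)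
    (hjac : Module.finrank ℝ
      (LinearMap.range
        ((fderiv ℝ
          (fun q : (Fin k → (Fin n → ℝ)) × (Fin k → (Fin m → ℝ)) =>
            fun i j => ∑ h, q.1 h i * q.2 h j) (x, y))).toLinearMap) =
      k * (n + m - k)) :
    LinearIndependent ℝ x ∧ LinearIndependent ℝ y := by
  classical
  set D := ContinuousLinearMap.pi fun i => ContinuousLinearMap.pi fun j =>
        ∑ h : Fin k, (x h i • ((ContinuousLinearMap.proj j).comp
                ((ContinuousLinearMap.proj h).comp
                  (ContinuousLinearMap.snd ℝ (Fin k → Fin n → ℝ) (Fin k → Fin m → ℝ)))) +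
              y h j • ((ContinuousLinearMap.proj i).comp
                ((ContinuousLinearMap.proj h).comp
                  (ContinuousLinearMap.fst ℝ (Fin k → Fin n → ℝ) (Fin k → Fin m → ℝ)))))
    with hD
  have hfd : fderiv ℝ
      (fun q : (Fin k → (Fin n → ℝ)) × (Fin k → (Fin m → ℝ)) =>
        fun i j => ∑ h, q.1 h i * q.2 h j) (x, y) = D :=
    (hasFDerivAt_dyadic x y).fderiv
  rw [hfd] at hjac
  set S : Submodule ℝ (Fin n → Fin m → ℝ) :=
    LinearMap.range ((D : (Fin k → Fin n → ℝ) × (Fin k → Fin m → ℝ) →L[ℝ]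
      (Fin n → Fin m → ℝ)).toLinearMap) with hS
  -- explicit formula for the derivative
  have hDapply : ∀ (q : (Fin k → Fin n → ℝ) × (Fin k → Fin m → ℝ)) (i : Fin n) (j : Fin m),
      D q i j = ∑ h, (x h i * q.2 h j + y h j * q.1 h i) := by
    intro q i j
    rw [hD]
    rw [ContinuousLinearMap.pi_apply, ContinuousLinearMap.pi_apply]
    rw [ContinuousLinearMap.sum_apply]
    apply Finset.sum_congr rfl
    intro h _
    simp
  -- the x-side containment
  have hbound1 := dim_bound x y S (by
    rintro M ⟨q, rfl⟩ w hw
    show (fun i => ∑ j, (D q : Fin n → Fin m → ℝ) i j * w j) ∈ Submodule.span ℝ (Set.range x)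
    have : (fun i => ∑ j, (D q : Fin n → Fin m → ℝ) i j * w j)
        = ∑ h, (∑ j, q.2 h j * w j) • x h := by
      funext i
      rw [Finset.sum_apply]
      have e1 : ∀ j, (D q : Fin n → Fin m → ℝ) i j * w j
          = ∑ h, (x h i * q.2 h j * w j + y h j * q.1 h i * w j) := by
        intro j
        rw [hDapply q i j, Finset.sum_mul]
        apply Finset.sum_congr rfl
        intro h _
        ring
      rw [Finset.sum_congr rfl fun j _ => e1 j]
      rw [Finset.sum_comm]
      have e2 : ∀ h, ∑ j, (x h i * q.2 h j * w j + y h j * q.1 h i * w j)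
          = (∑ j, q.2 h j * w j) * x h i + (∑ j, y h j * w j) * q.1 h i := by
        intro h
        rw [Finset.sum_add_distrib, Finset.sum_mul, Finset.sum_mul]
        congr 1
        · apply Finset.sum_congr rfl; intro j _; ring
        · apply Finset.sum_congr rfl; intro j _; ring
      rw [Finset.sum_congr rfl fun h _ => e2 h]
      apply Finset.sum_congr rfl
      intro h _
      rw [hw h]
      simp [mul_comm]
    rw [this]
    apply Submodule.sum_mem
    intro h _
    exact Submodule.smul_mem _ _ (Submodule.subset_span (Set.mem_range_self h)))
  -- the y-side containment, via transposition
  set τ : (Fin n → Fin m → ℝ) →ₗ[ℝ] (Fin m → Fin n → ℝ) :=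
    { toFun := fun M => fun j i => M i j
      map_add' := fun _ _ => rfl
      map_smul' := fun _ _ => rfl } with hτ
  have hbound2 := dim_bound y x (S.map τ) (by
    rintro M' ⟨M, hM, rfl⟩ w hw
    obtain ⟨q, rfl⟩ := hM
    show (fun j => ∑ i, (τ ((D q : Fin n → Fin m → ℝ))) j i * w i) ∈ Submodule.span ℝ (Set.range y)
    have : (fun j => ∑ i, (τ ((D q : Fin n → Fin m → ℝ))) j i * w i)
        = ∑ h, (∑ i, q.1 h i * w i) • y h := by
      funext j
      rw [Finset.sum_apply]
      have e1 : ∀ i, (τ ((D q : Fin n → Fin m → ℝ))) j i * w i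
          = ∑ h, (y h j * q.1 h i * w i + x h i * q.2 h j * w i) := by
        intro i
        have : (τ ((D q : Fin n → Fin m → ℝ))) j i = (D q : Fin n → Fin m → ℝ) i j := rfl
        rw [this, hDapply q i j, Finset.sum_mul]
        apply Finset.sum_congr rfl
        intro h _
        ring
      rw [Finset.sum_congr rfl fun i _ => e1 i]
      rw [Finset.sum_comm]
      have e2 : ∀ h, ∑ i, (y h j * q.1 h i * w i + x h i * q.2 h j * w i)
          = (∑ i, q.1 h i * w i) * y h j + (∑ i, x h i * w i) * q.2 h j := by
        intro h
        rw [Finset.sum_add_distrib, Finset.sum_mul, Finset.sum_mul]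
        congr 1
        · apply Finset.sum_congr rfl; intro i _; ring
        · apply Finset.sum_congr rfl; intro i _; ring
      rw [Finset.sum_congr rfl fun h _ => e2 h]
      apply Finset.sum_congr rfl
      intro h _
      rw [hw h]
      simp [mul_comm]
    rw [this]
    apply Submodule.sum_mem
    intro h _
    exact Submodule.smul_mem _ _ (Submodule.subset_span (Set.mem_range_self h)))
  have hmap : Module.finrank ℝ (S.map τ) = Module.finrank ℝ S := by
    set τ' : (Fin m → Fin n → ℝ) →ₗ[ℝ] (Fin n → Fin m → ℝ) :=
      { toFun := fun M => fun i j => M j i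
        map_add' := fun _ _ => rfl
        map_smul' := fun _ _ => rfl } with hτ'
    have h1 : τ.comp τ' = LinearMap.id := by apply LinearMap.ext; intro M; rfl
    have h2 : τ'.comp τ = LinearMap.id := by apply LinearMap.ext; intro M; rfl
    exact LinearEquiv.finrank_map_eq (LinearEquiv.ofLinear τ τ' h1 h2) S
  -- numbers
  obtain ⟨p, hp⟩ : ∃ p, n = k + p + 1 := ⟨n - k - 1, by omega⟩
  obtain ⟨q, hq⟩ : ∃ q, m = k + q + 1 := ⟨m - k - 1, by omega⟩
  have hduk : Module.finrank ℝ (Submodule.span ℝ (Set.range x)) ≤ k := by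
    have := finrank_range_le_card (R := ℝ) x
    rw [Set.finrank] at this
    simpa using this
  have hdvk : Module.finrank ℝ (Submodule.span ℝ (Set.range y)) ≤ k := by
    have := finrank_range_le_card (R := ℝ) y
    rw [Set.finrank] at this
    simpa using this
  constructor
  · by_contra hxli
    have hne : Module.finrank ℝ (Submodule.span ℝ (Set.range x)) ≠ k := by
      intro heq
      apply hxli
      rw [linearIndependent_iff_card_eq_finrank_span]
      rw [Set.finrank, heq, Fintype.card_fin]
    set du := Module.finrank ℝ (Submodule.span ℝ (Set.range x)) with hdu
    have hge : (q+1)*(p+2) ≤ (m-k)*(n-du) := Nat.mul_le_mul (by omega) (by omega)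
    rw [hjac] at hbound1
    have hA : k*(n+m-k) = k*(k+p+q+2) := by congr 1; omega
    have hB : n*m = (k+p+1)*(k+q+1) := by rw [hp, hq]
    have hcontra : k*(k+p+q+2) + (q+1)*(p+2) ≤ (k+p+1)*(k+q+1) := by
      rw [← hA, ← hB]
      omega
    have eL : k*(k+p+q+2) + (q+1)*(p+2) = (k+p+1)*(k+q+1) + q + 1 := by ring
    rw [eL] at hcontra
    linarith
  · by_contra hyli
    have hne : Module.finrank ℝ (Submodule.span ℝ (Set.range y)) ≠ k := by
      intro heq
      apply hyli
      rw [linearIndependent_iff_card_eq_finrank_span]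
      rw [Set.finrank, heq, Fintype.card_fin]
    set dv := Module.finrank ℝ (Submodule.span ℝ (Set.range y)) with hdv
    have hge : (p+1)*(q+2) ≤ (n-k)*(m-dv) := Nat.mul_le_mul (by omega) (by omega)
    rw [hmap, hjac] at hbound2
    have hA : k*(n+m-k) = k*(k+p+q+2) := by congr 1; omega
    have hB : m*n = (k+q+1)*(k+p+1) := by rw [hp, hq]
    have hcontra : k*(k+p+q+2) + (p+1)*(q+2) ≤ (k+q+1)*(k+p+1) := by
      rw [← hA, ← hB]
      omega
    have eL : k*(k+p+q+2) + (p+1)*(q+2) = (k+q+1)*(k+p+1) + p + 1 := by ring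
    rw [eL] at hcontra
    linarith

lemma isUnit_of_rank_eq {k : ℕ} (A : Matrix (Fin k) (Fin k) ℝ) (h : A.rank = k) : IsUnit A := by
  rw [← Matrix.mulVec_surjective_iff_isUnit]
  have h2 : LinearMap.range A.mulVecLin = ⊤ := by
    apply Submodule.eq_top_of_finrank_eq
    rw [Module.finrank_fintype_fun_eq_card, Fintype.card_fin]
    exact h
  intro v
  obtain ⟨w, hw⟩ := LinearMap.range_eq_top.1 h2 v
  exact ⟨w, hw⟩

lemma continuousAt_matrix_mul' {α : Type*} [TopologicalSpace α] {k l o : ℕ}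
    {f : α → Matrix (Fin k) (Fin l) ℝ} {g : α → Matrix (Fin l) (Fin o) ℝ} {a : α}
    (hf : ContinuousAt f a) (hg : ContinuousAt g a) :
    ContinuousAt (fun x => f x * g x) a :=
  ((continuous_fst.matrix_mul continuous_snd).continuousAt).comp (f := fun x => (f x, g x)) (hf.prodMk hg)

lemma upper_bound {n m k : ℕ} (P : Matrix (Fin n) (Fin m) ℝ)
    (x : Fin k → Fin n → ℝ) (y : Fin k → Fin m → ℝ)
    (hx : ∀ h i, 0 < x h i) (hy : ∀ h j, 0 < y h j)
    (hdec : P = ∑ h, Matrix.vecMulVec (x h) (y h))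
    (hxli : LinearIndependent ℝ x) (hyli : LinearIndependent ℝ y) :
    ∃ ε > (0:ℝ), ∀ N : Matrix (Fin n) (Fin m) ℝ, frobDist N P < ε → N.rank = P.rank →
      ∃ (c : Fin k → Fin n → ℝ) (r : Fin k → Fin m → ℝ),
        (∀ h i, 0 ≤ c h i) ∧ (∀ h j, 0 ≤ r h j) ∧
        N = ∑ h, Matrix.vecMulVec (c h) (r h) := by
  classical
  set X : Matrix (Fin n) (Fin k) ℝ := (Matrix.of x)ᵀ with hX
  set B : Matrix (Fin k) (Fin m) ℝ := Matrix.of y with hB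
  have hPXB : P = X * B := by
    ext i j
    rw [hdec, Matrix.sum_apply, Matrix.mul_apply]
    apply Finset.sum_congr rfl
    intro h _
    rw [Matrix.vecMulVec_apply]
    rfl
  -- ranks
  have hrkX : X.rank = k := by
    rw [Matrix.rank_eq_finrank_span_cols, hX]
    have : Set.range ((Matrix.of x)ᵀ.col) = Set.range x := rfl
    rw [this, finrank_span_eq_card hxli, Fintype.card_fin]
  have hrkB : B.rank = k := by
    rw [← Matrix.rank_transpose, Matrix.rank_eq_finrank_span_cols]
    have : Set.range (Bᵀ.col) = Set.range y := rfl
    rw [this, finrank_span_eq_card hyli, Fintype.card_fin]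
  set G : Matrix (Fin k) (Fin k) ℝ := Xᵀ * X with hG
  set H : Matrix (Fin k) (Fin k) ℝ := B * Bᵀ with hH
  have hGu : IsUnit G := by
    apply isUnit_of_rank_eq
    rw [hG, Matrix.rank_transpose_mul_self, hrkX]
  have hHu : IsUnit H := by
    apply isUnit_of_rank_eq
    have := Matrix.rank_transpose_mul_self Bᵀ
    rw [Matrix.transpose_transpose] at this
    rw [hH, this, Matrix.rank_transpose, hrkB]
  have hGdet : IsUnit G.det := (Matrix.isUnit_iff_isUnit_det G).1 hGu
  have hHdet : IsUnit H.det := (Matrix.isUnit_iff_isUnit_det H).1 hHu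
  -- the factor maps
  set A_ : Matrix (Fin n) (Fin m) ℝ → Matrix (Fin n) (Fin k) ℝ :=
    fun N => N * (Bᵀ * H⁻¹) with hA_
  set G_ : Matrix (Fin n) (Fin m) ℝ → Matrix (Fin k) (Fin k) ℝ :=
    fun N => (A_ N)ᵀ * (A_ N) with hG_
  set B'_ : Matrix (Fin n) (Fin m) ℝ → Matrix (Fin k) (Fin m) ℝ :=
    fun N => ((G_ N)⁻¹ * (A_ N)ᵀ) * N with hB'_
  have hAP : A_ P = X := by
    rw [hA_]
    show P * (Bᵀ * H⁻¹) = X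
    rw [hPXB, Matrix.mul_assoc X B (Bᵀ * H⁻¹), ← Matrix.mul_assoc B Bᵀ H⁻¹, ← hH,
      Matrix.mul_nonsing_inv H hHdet, Matrix.mul_one]
  have hGP : G_ P = G := by rw [hG_]; show (A_ P)ᵀ * (A_ P) = G; rw [hAP, hG]
  have hBP : B'_ P = B := by
    rw [hB'_]
    show ((G_ P)⁻¹ * (A_ P)ᵀ) * P = B
    rw [hGP, hAP, hPXB, Matrix.mul_assoc G⁻¹ Xᵀ (X * B), ← Matrix.mul_assoc Xᵀ X B, ← hG,
      ← Matrix.mul_assoc G⁻¹ G B, Matrix.nonsing_inv_mul G hGdet, Matrix.one_mul]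
  -- continuity
  have hAc : Continuous A_ := continuous_id.matrix_mul continuous_const
  have hGc : Continuous G_ := hAc.matrix_transpose.matrix_mul hAc
  have hdetc : Continuous fun N => (G_ N).det := hGc.matrix_det
  have hBc : ContinuousAt B'_ P := by
    have hinv : ContinuousAt (fun N => (G_ N)⁻¹) P := by
      apply ContinuousAt.comp (x := P) ?_ hGc.continuousAt
      apply continuousAt_matrix_inv
      rw [Ring.inverse_eq_inv']
      apply continuousAt_inv₀
      rw [hGP]
      exact hGdet.ne_zero
    exact continuousAt_matrix_mul'
      (continuousAt_matrix_mul' hinv hAc.matrix_transpose.continuousAt) continuousAt_id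
  -- the eventual properties
  have hev : ∀ᶠ N in 𝓝 P, ((G_ N).det ≠ 0 ∧ (∀ i h, 0 < A_ N i h) ∧
      (∀ h j, 0 < B'_ N h j)) := by
    refine Filter.Eventually.and ?_ (Filter.Eventually.and ?_ ?_)
    · apply hdetc.continuousAt.eventually_ne
      rw [hGP]
      exact hGdet.ne_zero
    · rw [Filter.eventually_all]
      intro i
      rw [Filter.eventually_all]
      intro h
      apply ((hAc.matrix_elem i h).continuousAt).eventually
      show ∀ᶠ z in 𝓝 (A_ P i h), 0 < z
      rw [hAP]
      exact eventually_gt_nhds (hx h i)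
    · rw [Filter.eventually_all]
      intro h
      rw [Filter.eventually_all]
      intro j
      have h1 : Continuous (fun M : Matrix (Fin k) (Fin m) ℝ => M h j) :=
        Continuous.matrix_elem continuous_id h j
      have hentry : ContinuousAt (fun N => B'_ N h j) P :=
        (h1.continuousAt).comp hBc
      apply hentry.eventually
      show ∀ᶠ z in 𝓝 (B'_ P h j), 0 < z
      rw [hBP]
      exact eventually_gt_nhds (hy h j)
  obtain ⟨ε, hε, hεP⟩ := exists_eps_of_mem_nhds hev
  -- rank of P
  have hrkP : P.rank = k := by
    apply le_antisymm
    · rw [hPXB]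
      exact (Matrix.rank_mul_le_left X B).trans (le_of_eq hrkX)
    · have hXPB : Xᵀ * (P * Bᵀ) = G * H := by
        rw [hPXB, Matrix.mul_assoc X B Bᵀ, ← Matrix.mul_assoc Xᵀ X (B * Bᵀ), ← hG, ← hH]
      have h1 : (Xᵀ * (P * Bᵀ)).rank = k := by
        rw [hXPB, Matrix.rank_of_isUnit (G * H) (hGu.mul hHu), Fintype.card_fin]
      calc k = (Xᵀ * (P * Bᵀ)).rank := h1.symm
        _ ≤ (P * Bᵀ).rank := Matrix.rank_mul_le_right Xᵀ (P * Bᵀ)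
        _ ≤ P.rank := Matrix.rank_mul_le_left P Bᵀ
  refine ⟨ε, hε, fun N hNP hNrk => ?_⟩
  obtain ⟨hdet, hApos, hBpos⟩ := hεP N hNP
  have hGNu : IsUnit (G_ N).det := isUnit_iff_ne_zero.2 hdet
  -- rank of A_ N is k
  have hrkA : (A_ N).rank = k := by
    have h1 : (G_ N).rank = k := by
      rw [Matrix.rank_of_isUnit (G_ N) ((Matrix.isUnit_iff_isUnit_det _).2 hGNu),
        Fintype.card_fin]
    rw [← Matrix.rank_transpose_mul_self (A_ N)]
    exact h1
  -- column space of A_ N equals column space of N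
  have hle : LinearMap.range (A_ N).mulVecLin ≤ LinearMap.range N.mulVecLin := by
    rw [hA_]
    show LinearMap.range (N * (Bᵀ * H⁻¹)).mulVecLin ≤ _
    rw [Matrix.mulVecLin_mul]
    exact LinearMap.range_comp_le_range _ _
  have hreq : LinearMap.range (A_ N).mulVecLin = LinearMap.range N.mulVecLin := by
    apply Submodule.eq_of_le_of_finrank_le hle
    show N.rank ≤ (A_ N).rank
    rw [hrkA, hNrk, hrkP]
  -- write N = A_ N * C
  have hcol : ∀ j, (fun i => N i j) ∈ LinearMap.range (A_ N).mulVecLin := by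
    intro j
    rw [hreq]
    refine ⟨Pi.single j 1, ?_⟩
    rw [Matrix.mulVecLin_apply, Matrix.mulVec_single]
    funext i
    simp [Matrix.col]
  choose cf hcf using hcol
  set C : Matrix (Fin k) (Fin m) ℝ := Matrix.of fun h j => cf j h with hC
  have hNAC : N = A_ N * C := by
    ext i j
    rw [Matrix.mul_apply]
    have := congrFun (hcf j) i
    rw [Matrix.mulVecLin_apply] at this
    rw [← this]
    rfl
  -- the exact factorization
  have hfact : A_ N * B'_ N = N := by
    obtain ⟨CC, hCC⟩ : ∃ CC, N = A_ N * CC := ⟨C, hNAC⟩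
    calc A_ N * B'_ N = A_ N * (((G_ N)⁻¹ * (A_ N)ᵀ) * N) := rfl
      _ = A_ N * (((G_ N)⁻¹ * (A_ N)ᵀ) * (A_ N * CC)) := by rw [← hCC]
      _ = A_ N * CC := by
          rw [Matrix.mul_assoc (G_ N)⁻¹ (A_ N)ᵀ (A_ N * CC),
            ← Matrix.mul_assoc (A_ N)ᵀ (A_ N) CC]
          show A_ N * ((G_ N)⁻¹ * (G_ N * CC)) = A_ N * CC
          rw [← Matrix.mul_assoc (G_ N)⁻¹ (G_ N) CC, Matrix.nonsing_inv_mul _ hGNu,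
            Matrix.one_mul]
      _ = N := hCC.symm
  refine ⟨fun h i => A_ N i h, fun h j => B'_ N h j, fun h i => (hApos i h).le,
    fun h j => (hBpos h j).le, ?_⟩
  ext i j
  rw [Matrix.sum_apply]
  have : ∀ h, Matrix.vecMulVec (fun i => A_ N i h) (fun j => B'_ N h j) i j
      = A_ N i h * B'_ N h j := fun h => Matrix.vecMulVec_apply _ _ _ _
  rw [Finset.sum_congr rfl fun h _ => this h]
  rw [← Matrix.mul_apply, hfact]


lemma matrix_eq_zero_of_rank_zero {n m : ℕ} (N : Matrix (Fin n) (Fin m) ℝ)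
    (h : N.rank = 0) : N = 0 := by
  have h1 : LinearMap.range N.mulVecLin = ⊥ := Submodule.finrank_eq_zero.1 h
  ext i j
  have h2 : N.mulVecLin (Pi.single j 1) ∈ LinearMap.range N.mulVecLin :=
    LinearMap.mem_range_self _ _
  rw [h1, Submodule.mem_bot] at h2
  have h3 := congrFun h2 i
  rw [Matrix.mulVecLin_apply, Matrix.mulVec_single] at h3
  simpa using h3


theorem isorank_perturbation {n m k : ℕ} (P : Matrix (Fin n) (Fin m) ℝ)
    (hP : ∀ i j, 0 ≤ P i j) (hk : nnRank P = k)
    (x : Fin k → Fin n → ℝ) (y : Fin k → Fin m → ℝ)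
    (hx : ∀ h i, 0 < x h i) (hy : ∀ h j, 0 < y h j)
    (hdec : P = ∑ h, Matrix.vecMulVec (x h) (y h))
    (hjac : Module.finrank ℝ
      (LinearMap.range
        ((fderiv ℝ
          (fun q : (Fin k → (Fin n → ℝ)) × (Fin k → (Fin m → ℝ)) =>
            fun i j => ∑ h, q.1 h i * q.2 h j) (x, y))).toLinearMap) =
      k * (n + m - k)) :
    ∃ ε > (0 : ℝ), ∀ N : Matrix (Fin n) (Fin m) ℝ,
      (∀ i j, 0 ≤ N i j) → frobDist N P < ε →
      N.rank = P.rank → nnRank N = nnRank P := by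
  classical
  rcases Nat.eq_zero_or_pos k with hk0 | hkpos
  · -- degenerate case k = 0
    subst hk0
    have hP0 : P = 0 := by rw [hdec]; simp
    refine ⟨1, one_pos, fun N _ _ hrk => ?_⟩
    have hN0 : N = 0 := by
      apply matrix_eq_zero_of_rank_zero
      rw [hrk, hP0, Matrix.rank_zero]
    rw [hN0, hP0]
  · -- main case k ≥ 1
    have hkn : k ≤ n := by
      obtain ⟨c, r, hc, hr, hPd⟩ := decomp_rows P hP
      have := nnRank_le_of_decomp hc hr hPd
      omega
    have hkm : k ≤ m := by
      obtain ⟨c, r, hc, hr, hPd⟩ := decomp_cols P hP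
      have := nnRank_le_of_decomp hc hr hPd
      omega
    -- lower bound: no decomposition of size k-1 near P
    have hnodec : ¬ ∃ (c : Fin (k-1) → Fin n → ℝ) (r : Fin (k-1) → Fin m → ℝ),
        (∀ h i, 0 ≤ c h i) ∧ (∀ h j, 0 ≤ r h j) ∧ P = ∑ h, Matrix.vecMulVec (c h) (r h) := by
      rintro ⟨c, r, hc, hr, hPd⟩
      have := nnRank_le_of_decomp hc hr hPd
      omega
    obtain ⟨ε₁, hε₁, hlow⟩ := no_small_decomp_near P hP hnodec
    -- upper bound
    have hupper : ∃ ε₂ > (0:ℝ), ∀ N : Matrix (Fin n) (Fin m) ℝ,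
        (∀ i j, 0 ≤ N i j) → frobDist N P < ε₂ → N.rank = P.rank → nnRank N ≤ k := by
      rcases eq_or_lt_of_le hkn with hkn' | hkn'
      · refine ⟨1, one_pos, fun N hN _ _ => ?_⟩
        obtain ⟨c, r, hc, hr, hNd⟩ := decomp_rows N hN
        have := nnRank_le_of_decomp hc hr hNd
        omega
      · rcases eq_or_lt_of_le hkm with hkm' | hkm'
        · refine ⟨1, one_pos, fun N hN _ _ => ?_⟩
          obtain ⟨c, r, hc, hr, hNd⟩ := decomp_cols N hN
          have := nnRank_le_of_decomp hc hr hNd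
          omega
        · obtain ⟨hxli, hyli⟩ := indep_of_jac hkn' hkm' x y hjac
          obtain ⟨ε₂, hε₂, hup⟩ := upper_bound P x y hx hy hdec hxli hyli
          refine ⟨ε₂, hε₂, fun N _ hfr hrk => ?_⟩
          obtain ⟨c, r, hc, hr, hNd⟩ := hup N hfr hrk
          exact nnRank_le_of_decomp hc hr hNd
    obtain ⟨ε₂, hε₂, hupp⟩ := hupper
    refine ⟨min ε₁ ε₂, lt_min hε₁ hε₂, fun N hN hfr hrk => ?_⟩
    have hub : nnRank N ≤ k := hupp N hN (lt_of_lt_of_le hfr (min_le_right _ _)) hrk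
    have hlb : k ≤ nnRank N := by
      by_contra hcon
      push_neg at hcon
      -- N has a decomposition of size nnRank N ≤ k - 1
      have hne : {j : ℕ | ∃ (c : Fin j → Fin n → ℝ) (r : Fin j → Fin m → ℝ),
          (∀ h i, 0 ≤ c h i) ∧ (∀ h j, 0 ≤ r h j) ∧
          N = ∑ h, Matrix.vecMulVec (c h) (r h)}.Nonempty := by
        obtain ⟨c, r, hc, hr, hNd⟩ := decomp_cols N hN
        exact ⟨m, c, r, hc, hr, hNd⟩
      have hmem := Nat.sInf_mem hne
      obtain ⟨c, r, hc, hr, hNd⟩ := hmem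
      obtain ⟨c', r', hc', hr', hNd'⟩ := decomp_pad N (l := k - 1) (by
        show nnRank N ≤ k - 1
        omega) c r hc hr hNd
      exact hlow N (lt_of_lt_of_le hfr (min_le_left _ _)) ⟨c', r', hc', hr', hNd'⟩
    rw [hk]
    omega
end

section
/- Let B₁ be the 4×4 matrix with rows (1,0,1,0),(1,0,0,1),(0,1,1,0),(0,1,0,1) and B₂ the matrix with rows (1,0,1,0),(1,1,0,0),(0,0,1,1),(0,1,0,1). Both B₁ and B₂ have rank 3 and nonnegative rank 4, but B = (B₁+B₂)/2 has nonnegative rank 3. Hence the set of 4×4 matrices of rank 3 whose nonnegative rank exceeds 3 is not convex. -/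
open Matrix BigOperators Filter Topology

/-- Rank is subadditive. -/
lemma myRank_add_le {m n : ℕ} (A B : Matrix (Fin m) (Fin n) ℝ) :
    (A + B).rank ≤ A.rank + B.rank := by
  classical
  unfold Matrix.rank
  rw [Matrix.mulVecLin_add]
  refine le_trans (Submodule.finrank_mono ?_)
    (Submodule.finrank_add_le_finrank_add_finrank _ _)
  rintro x ⟨y, rfl⟩
  exact Submodule.add_mem_sup ⟨y, rfl⟩ ⟨y, rfl⟩

/-- A dyad has rank at most one. -/
lemma myRank_vecMulVec_le {m n : ℕ} (w : Fin m → ℝ) (v : Fin n → ℝ) :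
    (Matrix.vecMulVec w v).rank ≤ 1 := by
  rw [Matrix.vecMulVec_eq Unit]
  exact (Matrix.rank_mul_le_left _ _).trans
    ((Matrix.rank_le_card_width _).trans (by simp))

lemma myRank_sum_le {m n k : ℕ} (M : Fin k → Matrix (Fin m) (Fin n) ℝ)
    (h : ∀ i, (M i).rank ≤ 1) : (∑ i, M i).rank ≤ k := by
  classical
  have key : ∀ s : Finset (Fin k), (∑ i ∈ s, M i).rank ≤ s.card := by
    intro s
    induction s using Finset.induction_on with
    | empty => simp [Matrix.rank_zero]
    | insert a s' hx ih =>
      rw [Finset.sum_insert hx, Finset.card_insert_of_notMem hx]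
      exact (myRank_add_le _ _).trans (by have := h a; omega)
  simpa using key Finset.univ

/-- Any nonnegative matrix is the sum of its columns as dyads. -/
lemma mem_cols {n m : ℕ} (P : Matrix (Fin n) (Fin m) ℝ) (hP : ∀ i j, 0 ≤ P i j) :
    m ∈ {k : ℕ | ∃ (c : Fin k → Fin n → ℝ) (r : Fin k → Fin m → ℝ),
      (∀ h i, 0 ≤ c h i) ∧ (∀ h j, 0 ≤ r h j) ∧
      P = ∑ h, Matrix.vecMulVec (c h) (r h)} := by
  refine ⟨fun h i => P i h, fun h j => if j = h then 1 else 0,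
    fun h i => hP i h, fun h j => by positivity, ?_⟩
  ext i j
  simp [Matrix.sum_apply, Matrix.vecMulVec_apply, mul_ite]

lemma nnRank_le_width {n m : ℕ} (P : Matrix (Fin n) (Fin m) ℝ)
    (hP : ∀ i j, 0 ≤ P i j) : nnRank P ≤ m :=
  Nat.sInf_le (mem_cols P hP)

lemma nnRank_le_of_fact {n m k : ℕ} (P : Matrix (Fin n) (Fin m) ℝ)
    (c : Fin k → Fin n → ℝ) (r : Fin k → Fin m → ℝ)
    (hc : ∀ h i, 0 ≤ c h i) (hr : ∀ h j, 0 ≤ r h j)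
    (heq : P = ∑ h, Matrix.vecMulVec (c h) (r h)) : nnRank P ≤ k :=
  Nat.sInf_le ⟨c, r, hc, hr, heq⟩

lemma rank_le_nnRank {n m : ℕ} (P : Matrix (Fin n) (Fin m) ℝ)
    (hP : ∀ i j, 0 ≤ P i j) : P.rank ≤ nnRank P := by
  refine le_csInf ⟨m, mem_cols P hP⟩ ?_
  rintro k ⟨c, r, -, -, heq⟩
  rw [heq]
  exact myRank_sum_le _ fun h => myRank_vecMulVec_le _ _

/-- The fooling-set lower bound for the nonnegative rank. -/
lemma four_le_nnRank (P : Matrix (Fin 4) (Fin 4) ℝ) (hP : ∀ i j, 0 ≤ P i j)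
    (i j : Fin 4 → Fin 4)
    (hpos : ∀ t, 0 < P (i t) (j t))
    (hfool : ∀ t s, t ≠ s → P (i t) (j s) ≤ 0 ∨ P (i s) (j t) ≤ 0) :
    4 ≤ nnRank P := by
  refine le_csInf ⟨4, mem_cols P hP⟩ ?_
  rintro k ⟨c, r, hc, hr, heq⟩
  by_contra hk
  push_neg at hk
  have entry : ∀ a b, P a b = ∑ h, c h a * r h b := by
    intro a b; rw [heq]; simp [Matrix.sum_apply, Matrix.vecMulVec_apply]
  have choice : ∀ t : Fin 4, ∃ h : Fin k, 0 < c h (i t) * r h (j t) := by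
    intro t
    have h1 : (∑ _h : Fin k, (0:ℝ)) < ∑ h, c h (i t) * r h (j t) := by
      rw [← entry]; simpa using hpos t
    obtain ⟨h, -, hh⟩ := Finset.exists_lt_of_sum_lt h1
    exact ⟨h, hh⟩
  choose φ hφ using choice
  have hninj : ¬ Function.Injective φ := by
    intro hinj
    have := Fintype.card_le_of_injective φ hinj
    simp at this; omega
  rw [Function.not_injective_iff] at hninj
  obtain ⟨t, s, hts, hne⟩ := hninj
  have comp : ∀ u : Fin 4, 0 < c (φ u) (i u) ∧ 0 < r (φ u) (j u) := by
    intro u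
    rcases mul_pos_iff.mp (hφ u) with h | h
    · exact h
    · exact absurd (hc (φ u) (i u)) (not_le.mpr h.1)
  have key : ∀ a b : Fin 4, 0 < c (φ t) a → 0 < r (φ t) b → 0 < P a b := by
    intro a b ha hb
    have hle : c (φ t) a * r (φ t) b ≤ ∑ h, c h a * r h b :=
      Finset.single_le_sum (fun h _ => mul_nonneg (hc h a) (hr h b))
        (Finset.mem_univ _)
    have := mul_pos ha hb
    rw [← entry] at hle
    linarith
  have h1 : 0 < P (i t) (j s) :=
    key _ _ (comp t).1 (by rw [hts]; exact (comp s).2)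
  have h2 : 0 < P (i s) (j t) :=
    key _ _ (by rw [hts]; exact (comp s).1) (comp t).2
  rcases hfool t s hne with h | h <;> linarith

lemma three_le_rank4 (M : Matrix (Fin 4) (Fin 4) ℝ) (A : Matrix (Fin 3) (Fin 4) ℝ)
    (Cs : Matrix (Fin 4) (Fin 3) ℝ) (h : IsUnit (A * M * Cs)) : 3 ≤ M.rank :=
  calc (3:ℕ) = (A * M * Cs).rank := by rw [Matrix.rank_of_isUnit _ h]; simp
    _ ≤ (A * M).rank := Matrix.rank_mul_le_left _ _
    _ ≤ M.rank := Matrix.rank_mul_le_right _ _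

lemma rank_le_three4 (M : Matrix (Fin 4) (Fin 4) ℝ) (C : Matrix (Fin 4) (Fin 3) ℝ)
    (R : Matrix (Fin 3) (Fin 4) ℝ) (h : M = C * R) : M.rank ≤ 3 :=
  calc M.rank = (C * R).rank := by rw [h]
    _ ≤ C.rank := Matrix.rank_mul_le_left _ _
    _ ≤ 3 := (Matrix.rank_le_card_width _).trans (by simp)

lemma rankB1 : (!![(1:ℝ),0,1,0; 1,0,0,1; 0,1,1,0; 0,1,0,1]).rank = 3 := by
  refine le_antisymm ?_ ?_
  · refine rank_le_three4 _ !![(1:ℝ),0,0; 0,1,0; 0,0,1; -1,1,1]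
      !![(1:ℝ),0,1,0; 1,0,0,1; 0,1,1,0] ?_
    ext i j
    fin_cases i <;> fin_cases j <;>
      simp [Matrix.mul_apply, Fin.sum_univ_three, Matrix.vecHead, Matrix.vecTail]
  · refine three_le_rank4 _ !![(1:ℝ),0,0,0; 0,1,0,0; 0,0,1,0]
      !![(1:ℝ),0,0; 0,1,0; 0,0,1; 0,0,0] ?_
    have hprod : (!![(1:ℝ),0,0,0; 0,1,0,0; 0,0,1,0] * !![(1:ℝ),0,1,0; 1,0,0,1; 0,1,1,0; 0,1,0,1] *
        !![(1:ℝ),0,0; 0,1,0; 0,0,1; 0,0,0]) = !![(1:ℝ),0,1; 1,0,0; 0,1,1] := by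
      ext i j
      fin_cases i <;> fin_cases j <;>
        simp [Matrix.mul_apply, Fin.sum_univ_four, Fin.sum_univ_three,
          Matrix.vecHead, Matrix.vecTail]
    rw [hprod, Matrix.isUnit_iff_isUnit_det, Matrix.det_fin_three]
    norm_num [Matrix.cons_val_two]

lemma rankB2 : (!![(1:ℝ),0,1,0; 1,1,0,0; 0,0,1,1; 0,1,0,1]).rank = 3 := by
  refine le_antisymm ?_ ?_
  · refine rank_le_three4 _ !![(1:ℝ),0,0; 0,1,0; 0,0,1; -1,1,1]
      !![(1:ℝ),0,1,0; 1,1,0,0; 0,0,1,1] ?_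
    ext i j
    fin_cases i <;> fin_cases j <;>
      simp [Matrix.mul_apply, Fin.sum_univ_three, Matrix.vecHead, Matrix.vecTail]
  · refine three_le_rank4 _ !![(1:ℝ),0,0,0; 0,1,0,0; 0,0,1,0]
      !![(1:ℝ),0,0; 0,1,0; 0,0,1; 0,0,0] ?_
    have hprod : (!![(1:ℝ),0,0,0; 0,1,0,0; 0,0,1,0] * !![(1:ℝ),0,1,0; 1,1,0,0; 0,0,1,1; 0,1,0,1] *
        !![(1:ℝ),0,0; 0,1,0; 0,0,1; 0,0,0]) = !![(1:ℝ),0,1; 1,1,0; 0,0,1] := by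
      ext i j
      fin_cases i <;> fin_cases j <;>
        simp [Matrix.mul_apply, Fin.sum_univ_four, Fin.sum_univ_three,
          Matrix.vecHead, Matrix.vecTail]
    rw [hprod, Matrix.isUnit_iff_isUnit_det, Matrix.det_fin_three]
    norm_num [Matrix.cons_val_two]

lemma nnB1 : nnRank !![(1:ℝ),0,1,0; 1,0,0,1; 0,1,1,0; 0,1,0,1] = 4 := by
  have hnn : ∀ i j, 0 ≤ (!![(1:ℝ),0,1,0; 1,0,0,1; 0,1,1,0; 0,1,0,1]) i j := by
    intro i j; fin_cases i <;> fin_cases j <;>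
      simp [Matrix.vecHead, Matrix.vecTail]
  refine le_antisymm (nnRank_le_width _ hnn) ?_
  refine four_le_nnRank _ hnn ![0,1,2,3] ![0,3,2,1] ?_ ?_
  · intro t; fin_cases t <;> simp [Matrix.vecHead, Matrix.vecTail]
  · intro t s hne
    fin_cases t <;> fin_cases s <;>
      simp_all [Matrix.vecHead, Matrix.vecTail]

lemma nnB2 : nnRank !![(1:ℝ),0,1,0; 1,1,0,0; 0,0,1,1; 0,1,0,1] = 4 := by
  have hnn : ∀ i j, 0 ≤ (!![(1:ℝ),0,1,0; 1,1,0,0; 0,0,1,1; 0,1,0,1]) i j := by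
    intro i j; fin_cases i <;> fin_cases j <;>
      simp [Matrix.vecHead, Matrix.vecTail]
  refine le_antisymm (nnRank_le_width _ hnn) ?_
  refine four_le_nnRank _ hnn ![0,1,2,3] ![2,0,3,1] ?_ ?_
  · intro t; fin_cases t <;> simp [Matrix.vecHead, Matrix.vecTail]
  · intro t s hne
    fin_cases t <;> fin_cases s <;>
      simp_all [Matrix.vecHead, Matrix.vecTail]

lemma midEq : (1/2 : ℝ) • (!![(1:ℝ),0,1,0; 1,0,0,1; 0,1,1,0; 0,1,0,1] +
    !![(1:ℝ),0,1,0; 1,1,0,0; 0,0,1,1; 0,1,0,1]) =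
    !![(1:ℝ),0,1,0; 1,1/2,0,1/2; 0,1/2,1,1/2; 0,1,0,1] := by
  ext i j
  fin_cases i <;> fin_cases j <;>
    simp [Matrix.smul_apply, Matrix.add_apply, Matrix.vecHead, Matrix.vecTail] <;> norm_num

lemma nnMid : nnRank !![(1:ℝ),0,1,0; 1,1/2,0,1/2; 0,1/2,1,1/2; 0,1,0,1] = 3 := by
  have hnn : ∀ i j, 0 ≤ (!![(1:ℝ),0,1,0; 1,1/2,0,1/2; 0,1/2,1,1/2; 0,1,0,1]) i j := by
    intro i j; fin_cases i <;> fin_cases j <;>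
      simp [Matrix.vecHead, Matrix.vecTail] <;> norm_num
  refine le_antisymm ?_ ?_
  · refine nnRank_le_of_fact _ ![![(1:ℝ),1,0,0], ![0,1/2,1/2,1], ![1,0,1,0]]
      ![![(1:ℝ),0,0,0], ![0,1,0,1], ![0,0,1,0]] ?_ ?_ ?_
    · intro h i; fin_cases h <;> fin_cases i <;> norm_num
    · intro h j; fin_cases h <;> fin_cases j <;> norm_num
    · ext i j
      fin_cases i <;> fin_cases j <;>
        simp [Matrix.sum_apply, Matrix.vecMulVec_apply, Fin.sum_univ_three,
          Matrix.vecHead, Matrix.vecTail] <;> norm_num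
  · have hrB : 3 ≤ (!![(1:ℝ),0,1,0; 1,1/2,0,1/2; 0,1/2,1,1/2; 0,1,0,1]).rank := by
      refine three_le_rank4 _ !![(1:ℝ),0,0,0; 0,1,0,0; 0,0,0,1]
        !![(1:ℝ),0,0; 0,1,0; 0,0,1; 0,0,0] ?_
      have hprod : (!![(1:ℝ),0,0,0; 0,1,0,0; 0,0,0,1] *
          !![(1:ℝ),0,1,0; 1,1/2,0,1/2; 0,1/2,1,1/2; 0,1,0,1] *
          !![(1:ℝ),0,0; 0,1,0; 0,0,1; 0,0,0]) = !![(1:ℝ),0,1; 1,1/2,0; 0,1,0] := by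
        ext i j
        fin_cases i <;> fin_cases j <;>
          simp [Matrix.mul_apply, Fin.sum_univ_four, Fin.sum_univ_three,
            Matrix.vecHead, Matrix.vecTail]
      rw [hprod, Matrix.isUnit_iff_isUnit_det, Matrix.det_fin_three]
      norm_num [Matrix.vecHead, Matrix.vecTail, Matrix.cons_val_two]
    exact hrB.trans (rank_le_nnRank _ hnn)

theorem complement_not_convex :
    (!![(1:ℝ),0,1,0; 1,0,0,1; 0,1,1,0; 0,1,0,1]).rank = 3 ∧
    nnRank !![(1:ℝ),0,1,0; 1,0,0,1; 0,1,1,0; 0,1,0,1] = 4 ∧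
    (!![(1:ℝ),0,1,0; 1,1,0,0; 0,0,1,1; 0,1,0,1]).rank = 3 ∧
    nnRank !![(1:ℝ),0,1,0; 1,1,0,0; 0,0,1,1; 0,1,0,1] = 4 ∧
    nnRank ((1/2 : ℝ) • (!![(1:ℝ),0,1,0; 1,0,0,1; 0,1,1,0; 0,1,0,1] +
      !![(1:ℝ),0,1,0; 1,1,0,0; 0,0,1,1; 0,1,0,1])) = 3 :=
  ⟨rankB1, nnB1, rankB2, nnB2, by rw [midEq]; exact nnMid⟩
end
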